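/- arXiv:1509.06221 — 2 statements merged into one kernel-verified Lean document; each statement's English description precedes it below -/
import Mathlib

section
/- Let λ > 0 and u a nontrivial solution of -u'' = λu on (-1,1) with u ∈ R_k for some k ≥ 0, where R_k is defined below. Then λ_{k-1}^M < λ < λ_{k+1}^M, where λ_j^M = ((2j+1)π/4)² are the mixed (Dirichlet–Neumann) eigenvalues of -u'' = λu on (-1,1) (with λ_{-1}^M := 0). -/
/-- Membership of `R_k^+`: `u'(-1) > 0`, `u(1)` has sign `(-1)^k`, and `u` has
only simple zeros in `(-1,1)`, either `k` or `k+1` of them. -/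
def RkPlus (k : ℕ) (u : ℝ → ℝ) : Prop :=
  0 < deriv u (-1) ∧
  (if Even k then 0 < u 1 else u 1 < 0) ∧
  (∀ x ∈ Set.Ioo (-1 : ℝ) 1, u x = 0 → deriv u x ≠ 0) ∧
  {x ∈ Set.Ioo (-1 : ℝ) 1 | u x = 0}.Finite ∧
  ({x ∈ Set.Ioo (-1 : ℝ) 1 | u x = 0}.ncard = k ∨
    {x ∈ Set.Ioo (-1 : ℝ) 1 | u x = 0}.ncard = k + 1)

open Real Set


lemma count_norm (om ph : ℝ) (hom : 0 < om) (k : ℕ)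
    (hal : ph - om ∈ Set.Ioo (-(π/2)) (π/2))
    (hbe : if Even k then 0 < Real.sin (ph + om) else Real.sin (ph + om) < 0)
    (hm : {x ∈ Set.Ioo (-1:ℝ) 1 | Real.sin (om*x + ph) = 0}.ncard = k ∨
          {x ∈ Set.Ioo (-1:ℝ) 1 | Real.sin (om*x + ph) = 0}.ncard = k + 1) :
    (2*(k:ℝ)-1)*π/4 < om ∧ om < (2*(k:ℝ)+3)*π/4 := by
  have hπ : (0:ℝ) < π := Real.pi_pos
  obtain ⟨hal1, hal2⟩ := hal
  set α := ph - om with hαdef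
  set β := ph + om with hβdef
  have hβα : β - α = 2 * om := by ring
  have hβne : Real.sin β ≠ 0 := by
    split_ifs at hbe with h
    · exact ne_of_gt hbe
    · exact ne_of_lt hbe
  set n : ℤ := ⌊β / π⌋ with hndef
  have hn2 : β < ((n:ℝ)+1)*π := by
    have h := Int.lt_floor_add_one (β/π)
    rw [div_lt_iff₀ hπ] at h
    push_cast at h ⊢
    linarith
  have hn1 : (n:ℝ)*π < β := by
    have h := Int.floor_le (β/π)
    rw [le_div_iff₀ hπ] at h
    rcases lt_or_eq_of_le h with h' | h'
    · exact h'
    · exact absurd (h' ▸ Real.sin_int_mul_pi n) hβne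
  set j0 : ℤ := if α < 0 then 0 else 1 with hj0def
  have hj00 : 0 ≤ j0 := by rw [hj0def]; split_ifs <;> norm_num
  have hj01 : j0 ≤ 1 := by rw [hj0def]; split_ifs <;> norm_num
  -- α < jπ ↔ j0 ≤ j
  have hleft : ∀ j : ℤ, α < (j:ℝ)*π ↔ j0 ≤ j := by
    intro j
    rw [hj0def]
    split_ifs with h
    · constructor
      · intro hj
        by_contra hc
        push_neg at hc
        have : (j:ℝ) ≤ -1 := by exact_mod_cast (by omega : j ≤ -1)
        nlinarith
      · intro hj
        have : (0:ℝ) ≤ (j:ℝ) := by exact_mod_cast hj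
        nlinarith
    · push_neg at h
      constructor
      · intro hj
        by_contra hc
        push_neg at hc
        have : (j:ℝ) ≤ 0 := by exact_mod_cast (by omega : j ≤ 0)
        nlinarith
      · intro hj
        have : (1:ℝ) ≤ (j:ℝ) := by exact_mod_cast hj
        nlinarith
  have hright : ∀ j : ℤ, (j:ℝ)*π < β ↔ j ≤ n := by
    intro j
    constructor
    · intro hj
      have : (j:ℝ) < (n:ℝ) + 1 := by
        by_contra hc
        push_neg at hc
        nlinarith
      exact_mod_cast (by exact_mod_cast Int.lt_add_one_iff.mp (by exact_mod_cast this))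
    · intro hj
      have : (j:ℝ) ≤ (n:ℝ) := by exact_mod_cast hj
      nlinarith
  have hset : {x ∈ Set.Ioo (-1:ℝ) 1 | Real.sin (om*x + ph) = 0}
      = (fun j : ℤ => ((j:ℝ)*π - ph)/om) '' ↑(Finset.Icc j0 n) := by
    ext x
    simp only [Set.mem_setOf_eq, Set.mem_image, Set.mem_Ioo, Finset.coe_Icc, Set.mem_Icc]
    constructor
    · rintro ⟨⟨hx1, hx2⟩, hsx⟩
      obtain ⟨j, hj⟩ := Real.sin_eq_zero_iff.1 hsx
      have hjα : α < (j:ℝ)*π := by rw [hj]; nlinarith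
      have hjβ : (j:ℝ)*π < β := by rw [hj]; nlinarith
      refine ⟨j, ⟨(hleft j).1 hjα, (hright j).1 hjβ⟩, ?_⟩
      field_simp
      linarith [hj]
    · rintro ⟨j, ⟨hj1, hj2⟩, rfl⟩
      have hjα : α < (j:ℝ)*π := (hleft j).2 hj1
      have hjβ : (j:ℝ)*π < β := (hright j).2 hj2
      have hx : om * (((j:ℝ)*π - ph)/om) + ph = (j:ℝ)*π := by field_simp; ring
      refine ⟨⟨?_, ?_⟩, by rw [hx]; exact Real.sin_int_mul_pi j⟩
      · rw [lt_div_iff₀ hom]; linarith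
      · rw [div_lt_iff₀ hom]; linarith
  have hinj : Function.Injective (fun j : ℤ => ((j:ℝ)*π - ph)/om) := by
    intro a b h
    simp only at h
    field_simp at h
    rcases mul_eq_zero.1 (show ((a:ℝ) - b) * π = 0 by linarith) with h | h
    · exact_mod_cast sub_eq_zero.1 h
    · exact absurd h hπ.ne'
  have hcount : {x ∈ Set.Ioo (-1:ℝ) 1 | Real.sin (om*x + ph) = 0}.ncard = (n + 1 - j0).toNat := by
    rw [hset, Set.ncard_image_of_injective _ hinj, Set.ncard_coe_finset, Int.card_Icc]
  -- parity
  have hpar : n % 2 = (k:ℤ) % 2 := by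
    have hs1 : 0 < Real.sin (β - (n:ℝ)*π) :=
      Real.sin_pos_of_pos_of_lt_pi (by linarith) (by linarith)
    have hs2 := Real.sin_add_int_mul_pi (β - (n:ℝ)*π) n
    rw [sub_add_cancel] at hs2
    rcases Int.even_or_odd n with he | ho
    · rw [he.neg_one_zpow, one_mul] at hs2
      have hkeven : Even k := by
        by_contra hk
        rw [if_neg hk] at hbe
        rw [hs2] at hbe
        linarith
      rw [Int.even_iff] at he
      rw [Nat.even_iff] at hkeven
      omega
    · rw [ho.neg_one_zpow, neg_one_mul] at hs2
      have hkodd : ¬ Even k := by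
        intro hk
        rw [if_pos hk, hs2] at hbe
        linarith
      rw [Int.odd_iff] at ho
      rw [Nat.not_even_iff] at hkodd
      omega
  have hmk : (n + 1 - j0).toNat = k ∨ (n + 1 - j0).toNat = k + 1 := by
    rw [← hcount]; exact hm
  have hnk : n ≤ (k:ℤ) := by omega
  have hkn : 1 ≤ k → (k:ℤ) ≤ n := by omega
  constructor
  · by_cases hk0 : k = 0
    · subst hk0
      push_cast
      nlinarith
    · have h1 : 1 ≤ k := Nat.one_le_iff_ne_zero.2 hk0
      have hnR : (k:ℝ) ≤ (n:ℝ) := by exact_mod_cast hkn h1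
      have h2 : (k:ℝ)*π ≤ (n:ℝ)*π := mul_le_mul_of_nonneg_right hnR hπ.le
      linarith
  · have hnR : (n:ℝ) ≤ (k:ℝ) := by exact_mod_cast hnk
    have h2 : ((n:ℝ)+1)*π ≤ ((k:ℝ)+1)*π :=
      mul_le_mul_of_nonneg_right (by linarith) hπ.le
    linarith

lemma count_gen (om ph : ℝ) (hom : 0 < om) (k : ℕ)
    (hal : 0 < Real.cos (ph - om))
    (hbe : if Even k then 0 < Real.sin (ph + om) else Real.sin (ph + om) < 0)
    (hm : {x ∈ Set.Ioo (-1:ℝ) 1 | Real.sin (om*x + ph) = 0}.ncard = k ∨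
          {x ∈ Set.Ioo (-1:ℝ) 1 | Real.sin (om*x + ph) = 0}.ncard = k + 1) :
    (2*(k:ℝ)-1)*π/4 < om ∧ om < (2*(k:ℝ)+3)*π/4 := by
  have hπ : (0:ℝ) < π := Real.pi_pos
  set l : ℤ := round ((ph - om)/(2*π)) with hldef
  set ph' : ℝ := ph - l*(2*π) with hph'def
  have hc : Real.cos (ph' - om) = Real.cos (ph - om) := by
    rw [show ph' - om = (ph - om) - l*(2*π) by ring]
    exact Real.cos_sub_int_mul_two_pi _ _
  have hs : Real.sin (ph' + om) = Real.sin (ph + om) := by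
    rw [show ph' + om = (ph + om) - l*(2*π) by ring]
    exact Real.sin_sub_int_mul_two_pi _ _
  have hsx : ∀ x : ℝ, Real.sin (om*x + ph') = Real.sin (om*x + ph) := by
    intro x
    rw [show om*x + ph' = (om*x + ph) - l*(2*π) by ring]
    exact Real.sin_sub_int_mul_two_pi _ _
  have habs : |ph' - om| ≤ π := by
    have hr := abs_sub_round ((ph - om)/(2*π))
    rw [show ph' - om = ((ph - om)/(2*π) - l) * (2*π) by field_simp; ring, abs_mul,
      abs_of_pos (by positivity : (0:ℝ) < 2*π)]
    nlinarith
  have hmem : ph' - om ∈ Set.Ioo (-(π/2)) (π/2) := by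
    have hcpos : 0 < Real.cos (ph' - om) := hc ▸ hal
    constructor
    · by_contra h
      push_neg at h
      have : Real.cos (ph' - om) ≤ 0 := by
        rw [← Real.cos_abs]
        apply Real.cos_nonpos_of_pi_div_two_le_of_le
        · rw [abs_le] at habs; rw [le_abs]; right; linarith
        · rw [abs_le] at habs; rw [abs_le]; constructor <;> linarith
      linarith
    · by_contra h
      push_neg at h
      have : Real.cos (ph' - om) ≤ 0 := by
        rw [← Real.cos_abs]
        apply Real.cos_nonpos_of_pi_div_two_le_of_le
        · rw [le_abs]; left; linarith
        · rw [abs_le] at habs; rw [abs_le]; constructor <;> linarith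
      linarith
  have hmset : {x ∈ Set.Ioo (-1:ℝ) 1 | Real.sin (om*x + ph') = 0}
      = {x ∈ Set.Ioo (-1:ℝ) 1 | Real.sin (om*x + ph) = 0} := by
    ext x; simp [hsx x]
  exact count_norm om ph' hom k hmem (by rw [hs]; exact hbe) (by rw [hmset]; exact hm)


lemma repr_lemma (lam : ℝ) (hlam : 0 < lam) (u : ℝ → ℝ)
    (hu : ContDiffOn ℝ 2 u (Set.Icc (-1 : ℝ) 1))
    (hode : ∀ x ∈ Set.Ioo (-1 : ℝ) 1, deriv (deriv u) x = -lam * u x) :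
    ∀ x ∈ Set.Icc (-1:ℝ) 1, u x = u 0 * Real.cos (Real.sqrt lam * x)
      + (deriv u 0 / Real.sqrt lam) * Real.sin (Real.sqrt lam * x) := by
  set om := Real.sqrt lam with homdef
  have hom : 0 < om := Real.sqrt_pos.2 hlam
  have hom2 : om ^ 2 = lam := Real.sq_sqrt hlam.le
  have hsub : Set.Ioo (-1:ℝ) 1 ⊆ Set.Icc (-1:ℝ) 1 := Set.Ioo_subset_Icc_self
  have hmem : ∀ x ∈ Set.Ioo (-1:ℝ) 1, Set.Icc (-1:ℝ) 1 ∈ nhds x :=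
    fun x hx => Icc_mem_nhds hx.1 hx.2
  have hd : ∀ x ∈ Set.Ioo (-1:ℝ) 1, HasDerivAt u (deriv u x) x := by
    intro x hx
    exact ((hu.contDiffAt (hmem x hx)).differentiableAt (by norm_num)).hasDerivAt
  have hcd1 : ContDiffOn ℝ 1 (deriv u) (Set.Ioo (-1:ℝ) 1) := by
    have h2 : ContDiffOn ℝ 2 u (Set.Ioo (-1:ℝ) 1) := hu.mono hsub
    rw [show (2 : WithTop ℕ∞) = 1 + 1 by norm_num,
      contDiffOn_succ_iff_deriv_of_isOpen isOpen_Ioo] at h2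
    exact h2.2.2
  have hd2 : ∀ x ∈ Set.Ioo (-1:ℝ) 1, HasDerivAt (deriv u) (deriv (deriv u) x) x := by
    intro x hx
    exact ((hcd1.differentiableOn (by norm_num)).differentiableAt
      (isOpen_Ioo.mem_nhds hx)).hasDerivAt
  have hlin : ∀ x : ℝ, HasDerivAt (fun y => om * y) om x := by
    intro x
    simpa using (hasDerivAt_id x).const_mul om
  have hcos : ∀ x : ℝ, HasDerivAt (fun y => Real.cos (om * y)) (-Real.sin (om*x) * om) x :=
    fun x => (hlin x).cos
  have hsin : ∀ x : ℝ, HasDerivAt (fun y => Real.sin (om * y)) (Real.cos (om*x) * om) x :=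
    fun x => (hlin x).sin
  set F : ℝ → ℝ := fun y => om * u y * Real.cos (om*y) - deriv u y * Real.sin (om*y) with hFdef
  set G : ℝ → ℝ := fun y => deriv u y * Real.cos (om*y) + om * u y * Real.sin (om*y) with hGdef
  have hF' : ∀ x ∈ Set.Ioo (-1:ℝ) 1, HasDerivAt F 0 x := by
    intro x hx
    have h1 := (((hd x hx).const_mul om).mul (hcos x)).sub ((hd2 x hx).mul (hsin x))
    refine h1.congr_deriv ?_
    rw [hode x hx, ← hom2]
    ring
  have hG' : ∀ x ∈ Set.Ioo (-1:ℝ) 1, HasDerivAt G 0 x := by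
    intro x hx
    have h1 := ((hd2 x hx).mul (hcos x)).add (((hd x hx).const_mul om).mul (hsin x))
    refine h1.congr_deriv ?_
    rw [hode x hx, ← hom2]
    ring
  have key : ∀ (H : ℝ → ℝ), (∀ x ∈ Set.Ioo (-1:ℝ) 1, HasDerivAt H 0 x) →
      ∀ x ∈ Set.Ioo (-1:ℝ) 1, H x = H 0 := by
    intro H hH x hx
    refine (convex_Ioo (-1:ℝ) 1).is_const_of_fderivWithin_eq_zero
      (fun y hy => (hH y hy).differentiableAt.differentiableWithinAt) ?_ hx (by norm_num)
    intro y hy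
    rw [fderivWithin_of_isOpen isOpen_Ioo hy, (hH y hy).hasFDerivAt.fderiv]
    ext z
    simp
  have hF0 : F 0 = om * u 0 := by simp [hFdef]
  have hG0 : G 0 = deriv u 0 := by simp [hGdef]
  have hIoo : ∀ x ∈ Set.Ioo (-1:ℝ) 1, u x = u 0 * Real.cos (om * x)
      + (deriv u 0 / om) * Real.sin (om * x) := by
    intro x hx
    have h1 : F x = om * u 0 := (key F hF' x hx).trans hF0
    have h2 : G x = deriv u 0 := (key G hG' x hx).trans hG0
    have hid : om * u x = F x * Real.cos (om*x) + G x * Real.sin (om*x) := by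
      simp only [hFdef, hGdef]
      linear_combination (-(om * u x)) * (Real.sin_sq_add_cos_sq (om*x))
    rw [h1, h2] at hid
    field_simp
    linarith
  have hcl : Set.EqOn u (fun x => u 0 * Real.cos (om * x) + (deriv u 0 / om) * Real.sin (om * x))
      (Set.Icc (-1:ℝ) 1) := by
    apply Set.EqOn.of_subset_closure (fun x hx => hIoo x hx) hu.continuousOn
    · exact Continuous.continuousOn (by fun_prop)
    · exact hsub
    · rw [closure_Ioo (by norm_num : (-1:ℝ) ≠ 1)]
  exact fun x hx => hcl hx

lemma key_half (lam : ℝ) (hlam : 0 < lam) (u : ℝ → ℝ)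
    (hu : ContDiffOn ℝ 2 u (Set.Icc (-1 : ℝ) 1))
    (hode : ∀ x ∈ Set.Ioo (-1 : ℝ) 1, deriv (deriv u) x = -lam * u x)
    (hnt : ∃ x ∈ Set.Icc (-1 : ℝ) 1, u x ≠ 0)
    (k : ℕ) (hR : RkPlus k u) :
    (2*(k:ℝ)-1)*π/4 < Real.sqrt lam ∧ Real.sqrt lam < (2*(k:ℝ)+3)*π/4 := by
  set om := Real.sqrt lam with homdef
  have hom : 0 < om := Real.sqrt_pos.2 hlam
  have hrep := repr_lemma lam hlam u hu hode
  set a := u 0 with hadef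
  set b := deriv u 0 / om with hbdef
  obtain ⟨h1, h2, _, _, h5⟩ := hR
  set z : ℂ := ⟨b, a⟩ with hzdef
  have hz : z ≠ 0 := by
    intro hz0
    have hab : a = 0 ∧ b = 0 := by
      rw [Complex.ext_iff] at hz0
      exact ⟨hz0.2, hz0.1⟩
    obtain ⟨x, hx, hne⟩ := hnt
    apply hne
    rw [hrep x hx, hab.1, hab.2]
    ring
  set r := ‖z‖ with hrdef
  have hr : 0 < r := norm_pos_iff.mpr hz
  set φ := Complex.arg z with hφdef
  have ha' : a = r * Real.sin φ := by
    rw [hφdef, Complex.sin_arg]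
    field_simp [hrdef]
    exact mul_comm _ _
  have hb' : b = r * Real.cos φ := by
    rw [hφdef, Complex.cos_arg hz]
    field_simp [hrdef]
    exact mul_comm _ _
  have hrep2 : ∀ x ∈ Set.Icc (-1:ℝ) 1, u x = r * Real.sin (om * x + φ) := by
    intro x hx
    rw [hrep x hx, ha', hb', homdef, Real.sin_add]
    ring
  -- derivative at -1
  have hdiff : DifferentiableAt ℝ u (-1) := by
    by_contra h
    rw [deriv_zero_of_not_differentiableAt h] at h1
    exact lt_irrefl 0 h1
  have hgd : HasDerivAt (fun x : ℝ => r * Real.sin (om * x + φ))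
      (r * (Real.cos (om * (-1) + φ) * om)) (-1) := by
    have hl : HasDerivAt (fun x : ℝ => om * x + φ) om (-1) := by
      simpa using ((hasDerivAt_id (-1:ℝ)).const_mul om).add_const φ
    exact hl.sin.const_mul r
  have hmem1 : (-1:ℝ) ∈ Set.Icc (-1:ℝ) 1 := by norm_num
  have hudw : HasDerivWithinAt u (r * (Real.cos (om * (-1) + φ) * om)) (Set.Icc (-1:ℝ) 1) (-1) :=
    (hgd.hasDerivWithinAt).congr (fun y hy => hrep2 y hy) (hrep2 (-1) hmem1)
  have hudw2 : HasDerivWithinAt u (deriv u (-1)) (Set.Icc (-1:ℝ) 1) (-1) :=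
    hdiff.hasDerivAt.hasDerivWithinAt
  have hUD : UniqueDiffWithinAt ℝ (Set.Icc (-1:ℝ) 1) (-1) :=
    (uniqueDiffOn_Icc (by norm_num : (-1:ℝ) < 1)) (-1) hmem1
  have hderiv_eq : deriv u (-1) = r * (Real.cos (om * (-1) + φ) * om) := by
    rw [← hudw2.derivWithin hUD, ← hudw.derivWithin hUD]
  have hcos_pos : 0 < Real.cos (φ - om) := by
    rw [hderiv_eq, show om * (-1) + φ = φ - om by ring] at h1
    by_contra h
    push_neg at h
    have h3 : Real.cos (φ - om) * om ≤ 0 := mul_nonpos_of_nonpos_of_nonneg h hom.le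
    have h4 : r * (Real.cos (φ - om) * om) ≤ 0 := mul_nonpos_of_nonneg_of_nonpos hr.le h3
    linarith
  have hsin_sign : if Even k then 0 < Real.sin (φ + om) else Real.sin (φ + om) < 0 := by
    have hu1 : u 1 = r * Real.sin (φ + om) := by
      rw [hrep2 1 (by norm_num), show om * 1 + φ = φ + om by ring]
    rw [hu1] at h2
    split_ifs at h2 ⊢ with hk
    · by_contra h
      push_neg at h
      nlinarith
    · by_contra h
      push_neg at h
      nlinarith
  have hzeros : {x ∈ Set.Ioo (-1:ℝ) 1 | u x = 0}
      = {x ∈ Set.Ioo (-1:ℝ) 1 | Real.sin (om*x + φ) = 0} := by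
    ext x
    simp only [Set.mem_setOf_eq, Set.mem_Ioo]
    constructor
    · rintro ⟨hx, hux⟩
      refine ⟨hx, ?_⟩
      rw [hrep2 x (Set.Ioo_subset_Icc_self hx)] at hux
      rcases mul_eq_zero.1 hux with h | h
      · exact absurd h hr.ne'
      · exact h
    · rintro ⟨hx, hsx⟩
      exact ⟨hx, by rw [hrep2 x (Set.Ioo_subset_Icc_self hx), hsx, mul_zero]⟩
  exact count_gen om φ hom k hcos_pos hsin_sign (by rw [← hzeros]; exact h5)

/-- If `u ∈ R_k` is a nontrivial solution of `-u'' = λ u` on `(-1,1)`, then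
`λ_{k-1}^M < λ < λ_{k+1}^M`, where `λ_j^M = ((2j+1)π/4)²` (`λ_{-1}^M := 0`). -/
theorem stmt8 (lam : ℝ) (hlam : 0 < lam) (u : ℝ → ℝ)
    (hu : ContDiffOn ℝ 2 u (Set.Icc (-1 : ℝ) 1))
    (hode : ∀ x ∈ Set.Ioo (-1 : ℝ) 1, deriv (deriv u) x = -lam * u x)
    (hnt : ∃ x ∈ Set.Icc (-1 : ℝ) 1, u x ≠ 0)
    (k : ℕ) (hR : RkPlus k u ∨ RkPlus k (-u)) :
    (if k = 0 then (0 : ℝ)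
      else ((2 * (k : ℝ) - 1) * Real.pi / 4) ^ 2) < lam ∧
    lam < ((2 * (k : ℝ) + 3) * Real.pi / 4) ^ 2 := by
  have hπ : (0:ℝ) < π := Real.pi_pos
  have hkey : (2*(k:ℝ)-1)*π/4 < Real.sqrt lam ∧ Real.sqrt lam < (2*(k:ℝ)+3)*π/4 := by
    rcases hR with hR | hR
    · exact key_half lam hlam u hu hode hnt k hR
    · refine key_half lam hlam (-u) hu.neg ?_ ?_ k hR
      · intro x hx
        have hneg : deriv (-u) = fun y => -deriv u y := by
          funext y
          exact deriv.neg
        rw [hneg, deriv.fun_neg, hode x hx, Pi.neg_apply]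
        ring
      · obtain ⟨x, hx, hne⟩ := hnt
        exact ⟨x, hx, by simpa using hne⟩
  obtain ⟨hlow, hhigh⟩ := hkey
  have hsq : Real.sqrt lam ^ 2 = lam := Real.sq_sqrt hlam.le
  have hsnn : 0 ≤ Real.sqrt lam := Real.sqrt_nonneg lam
  constructor
  · split_ifs with hk
    · exact hlam
    · have hk1 : (1:ℝ) ≤ (k:ℝ) := by exact_mod_cast Nat.one_le_iff_ne_zero.2 hk
      have ha : 0 ≤ (2*(k:ℝ)-1)*π/4 := by nlinarith
      calc ((2 * (k:ℝ) - 1) * π / 4) ^ 2 < Real.sqrt lam ^ 2 :=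
            pow_lt_pow_left₀ hlow ha (by norm_num)
        _ = lam := hsq
  · calc lam = Real.sqrt lam ^ 2 := hsq.symm
      _ < ((2 * (k:ℝ) + 3) * π / 4) ^ 2 := pow_lt_pow_left₀ hhigh hsnn (by norm_num)
end

section
/- For each integer k ≥ 0 and each sign ν ∈ {+,-}, the nodal set S_k^ν is open in C²[-1,1], and the sets S_k^ν for distinct (k,ν) are pairwise disjoint. -/
/-- The nodal set `S_k^+` in `C²[-1,1]`. -/
def SPlus (k : ℕ) (u : ℝ → ℝ) : Prop :=
  ContDiffOn ℝ 2 u (Set.Icc (-1 : ℝ) 1) ∧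
  u (-1) ≠ 0 ∧ u 1 ≠ 0 ∧ 0 < u (-1) ∧
  (∀ x ∈ Set.Ioo (-1 : ℝ) 1, u x = 0 → deriv u x ≠ 0) ∧
  {x ∈ Set.Ioo (-1 : ℝ) 1 | u x = 0}.Finite ∧
  {x ∈ Set.Ioo (-1 : ℝ) 1 | u x = 0}.ncard = k

/-- `S_k^ν`, where `ν = true` is `+` and `ν = false` is `-` (`S_k^- = -S_k^+`). -/
def SNodal (k : ℕ) (ν : Bool) (u : ℝ → ℝ) : Prop :=
  if ν then SPlus k u else SPlus k (-u)

open Set Filter Topology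

lemma contOn_deriv (u : ℝ → ℝ) (hu : ContDiffOn ℝ 2 u (Set.Icc (-1:ℝ) 1)) :
    ContinuousOn (deriv u) (Set.Ioo (-1:ℝ) 1) := by
  have h1 : ContinuousOn (derivWithin u (Set.Icc (-1:ℝ) 1)) (Set.Icc (-1:ℝ) 1) :=
    hu.continuousOn_derivWithin (uniqueDiffOn_Icc (by norm_num)) (by norm_num)
  refine (h1.mono Set.Ioo_subset_Icc_self).congr ?_
  intro x hx
  exact (derivWithin_of_mem_nhds (Icc_mem_nhds hx.1 hx.2)).symm

lemma sep_disjoint {z z' dz dz' x : ℝ} (h1 : x ∈ Set.Icc (z - dz) (z + dz))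
    (h2 : x ∈ Set.Ioo (z' - dz') (z' + dz'))
    (hs : 2 * dz < |z - z'|) (hs' : 2 * dz' < |z' - z|) : False := by
  rw [abs_sub_comm] at hs'
  have hh : |z - z'| < dz + dz' := by
    rw [abs_sub_lt_iff]
    obtain ⟨a1, a2⟩ := h1
    obtain ⟨b1, b2⟩ := h2
    constructor <;> linarith
  rcases abs_cases (z - z') with ⟨he, _⟩ | ⟨he, _⟩ <;> linarith

lemma key_interval {a b : ℝ} (hab : a < b) {v : ℝ → ℝ}
    (hvc : ContinuousOn v (Set.Icc a b))
    (hva : v a < 0) (hvb : 0 < v b)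
    (hd : ∀ y ∈ Set.Ioo a b, 0 < deriv v y) :
    ∃ ζ ∈ Set.Ioo a b, v ζ = 0 ∧ ∀ ζ' ∈ Set.Icc a b, v ζ' = 0 → ζ' = ζ := by
  have hmono : StrictMonoOn v (Set.Icc a b) :=
    strictMonoOn_of_deriv_pos (convex_Icc a b) hvc (by rwa [interior_Icc])
  obtain ⟨ζ, hζ, hζ0⟩ := intermediate_value_Ioo hab.le hvc (Set.mem_Ioo.2 ⟨hva, hvb⟩)
  exact ⟨ζ, hζ, hζ0, fun ζ' hζ' h0 =>
    hmono.injOn hζ' (Set.Ioo_subset_Icc_self hζ) (by rw [h0, hζ0])⟩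

theorem splus_open (k : ℕ) (u : ℝ → ℝ) (h : SPlus k u) :
    ∃ ε > 0, ∀ v : ℝ → ℝ, ContDiffOn ℝ 2 v (Set.Icc (-1 : ℝ) 1) →
      (∀ x ∈ Set.Icc (-1 : ℝ) 1,
        |v x - u x| < ε ∧ |deriv v x - deriv u x| < ε ∧
        |deriv (deriv v) x - deriv (deriv u) x| < ε) →
      SPlus k v := by
  obtain ⟨hu, hm1, hp1, hpos, hsimp, hfin, hcard⟩ := h
  set Z := {x ∈ Set.Ioo (-1:ℝ) 1 | u x = 0} with hZdef
  have hderivC : ContinuousOn (deriv u) (Set.Ioo (-1:ℝ) 1) := contOn_deriv u hu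
  -- choose δ z for each z
  have hδex : ∀ z : ℝ, ∃ d : ℝ, 0 < d ∧ (z ∈ Z →
      Set.Icc (z - d) (z + d) ⊆ Set.Ioo (-1:ℝ) 1 ∧
      (∀ y ∈ Set.Icc (z - d) (z + d), |deriv u y - deriv u z| ≤ |deriv u z| / 2) ∧
      (∀ z' ∈ Z, z' ≠ z → 2 * d < |z - z'|)) := by
    intro z
    by_cases hz : z ∈ Z
    · have hzI : z ∈ Set.Ioo (-1:ℝ) 1 := hz.1
      have h1 : ∀ᶠ d in 𝓝[>] (0:ℝ),
          Set.Icc (z - d) (z + d) ⊆ Set.Ioo (-1:ℝ) 1 := by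
        have : Set.Ioo (0:ℝ) (min (z + 1) (1 - z)) ∈ 𝓝[>] (0:ℝ) :=
          Ioo_mem_nhdsGT (by
            have h1 := hzI.1; have h2 := hzI.2
            simp only [lt_min_iff]; constructor <;> linarith)
        filter_upwards [this] with d hd
        intro y hy
        have h1 := lt_min_iff.1 hd.2
        exact ⟨by linarith [hy.1, h1.1], by linarith [hy.2, h1.2]⟩
      have hdz : deriv u z ≠ 0 := hsimp z hzI hz.2
      have h2 : ∀ᶠ d in 𝓝[>] (0:ℝ),
          ∀ y ∈ Set.Icc (z - d) (z + d), |deriv u y - deriv u z| ≤ |deriv u z| / 2 := by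
        have hca : ContinuousAt (deriv u) z :=
          hderivC.continuousAt (Ioo_mem_nhds hzI.1 hzI.2)
        rw [Metric.continuousAt_iff] at hca
        obtain ⟨r, hr, hball⟩ := hca (|deriv u z| / 2) (by positivity)
        have : Set.Ioo (0:ℝ) r ∈ 𝓝[>] (0:ℝ) := Ioo_mem_nhdsGT hr
        filter_upwards [this] with d hd
        intro y hy
        have : dist y z < r := by
          rw [Real.dist_eq, abs_sub_lt_iff]
          exact ⟨by linarith [hy.2, hd.2], by linarith [hy.1, hd.2]⟩
        have := hball this
        rw [Real.dist_eq] at this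
        exact this.le
      have h3 : ∀ᶠ d in 𝓝[>] (0:ℝ), ∀ z' ∈ Z, z' ≠ z → 2 * d < |z - z'| := by
        rw [eventually_all_finite hfin]
        intro z' hz'
        by_cases hne : z' = z
        · simp [hne]
        · have hpos' : 0 < |z - z'| := by
            rw [abs_pos, sub_ne_zero]
            exact fun he => hne he.symm
          have : Set.Ioo (0:ℝ) (|z - z'| / 2) ∈ 𝓝[>] (0:ℝ) :=
            Ioo_mem_nhdsGT (by positivity)
          filter_upwards [this] with d hd _
          linarith [hd.2]
      obtain ⟨d, ⟨⟨hd1, hd2⟩, hd3⟩, hd4⟩ :=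
        (((h1.and h2).and h3).and self_mem_nhdsWithin).exists
      exact ⟨d, hd4, fun _ => ⟨hd1, hd2, hd3⟩⟩
    · exact ⟨1, one_pos, fun h => absurd h hz⟩
  choose δ hδpos hδspec using hδex
  set U : Set ℝ := ⋃ z ∈ Z, Set.Ioo (z - δ z) (z + δ z) with hUdef
  have hUopen : IsOpen U := isOpen_biUnion fun z _ => isOpen_Ioo
  have hUsub : U ⊆ Set.Ioo (-1:ℝ) 1 := by
    intro x hx
    simp only [hUdef, Set.mem_iUnion] at hx
    obtain ⟨z, hz, hmem⟩ := hx
    exact (hδspec z hz).1 (Set.Ioo_subset_Icc_self hmem)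
  set K : Set ℝ := Set.Icc (-1:ℝ) 1 \ U with hKdef
  have hKcomp : IsCompact K := isCompact_Icc.diff hUopen
  have hKsub : K ⊆ Set.Icc (-1:ℝ) 1 := Set.diff_subset
  have hm1K : (-1:ℝ) ∈ K :=
    ⟨Set.left_mem_Icc.2 (by norm_num), fun h => absurd (hUsub h).1 (lt_irrefl _)⟩
  have hp1K : (1:ℝ) ∈ K :=
    ⟨Set.right_mem_Icc.2 (by norm_num), fun h => absurd (hUsub h).2 (lt_irrefl _)⟩
  have hKnz : ∀ x ∈ K, u x ≠ 0 := by
    rintro x ⟨hxI, hxU⟩ hx0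
    rcases eq_or_lt_of_le hxI.1 with h | h
    · exact hm1 (h ▸ hx0)
    rcases eq_or_lt_of_le hxI.2 with h2 | h2
    · exact hp1 (h2 ▸ hx0)
    have hxZ : x ∈ Z := ⟨⟨h, h2⟩, hx0⟩
    exact hxU (Set.mem_biUnion hxZ ⟨by linarith [hδpos x], by linarith [hδpos x]⟩)
  obtain ⟨x₀, hx₀K, hx₀min⟩ := hKcomp.exists_isMinOn ⟨-1, hm1K⟩
    ((hu.continuousOn.mono hKsub).abs)
  set c := |u x₀| with hcdef
  have hc : 0 < c := abs_pos.2 (hKnz _ hx₀K)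
  have hcle : ∀ x ∈ K, c ≤ |u x| := fun x hx => hx₀min hx
  -- choose ε
  have hεex : ∃ ε : ℝ, 0 < ε ∧ ε < c ∧ ∀ z ∈ Z, ε < |deriv u z| / 2 := by
    have h1 : ∀ᶠ ε in 𝓝[>] (0:ℝ), ε < c := by
      filter_upwards [Ioo_mem_nhdsGT hc] with ε hε using hε.2
    have h2 : ∀ᶠ ε in 𝓝[>] (0:ℝ), ∀ z ∈ Z, ε < |deriv u z| / 2 := by
      rw [eventually_all_finite hfin]
      intro z hz
      have : 0 < |deriv u z| / 2 := by
        have := hsimp z hz.1 hz.2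
        positivity
      filter_upwards [Ioo_mem_nhdsGT this] with ε hε using hε.2
    obtain ⟨ε, ⟨hε1, hε2⟩, hε3⟩ := ((h1.and h2).and self_mem_nhdsWithin).exists
    exact ⟨ε, hε3, hε1, hε2⟩
  obtain ⟨ε, hε0, hεc, hεZ⟩ := hεex
  refine ⟨ε, hε0, ?_⟩
  intro v hv hclose
  -- v is nonzero on K
  have hvKnz : ∀ x ∈ K, v x ≠ 0 := by
    intro x hx h0
    have h := (hclose x (hKsub hx)).1
    rw [h0, zero_sub, abs_neg] at h
    exact absurd (hcle x hx) (not_le.2 (h.trans hεc))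
  -- sign at -1
  have hvm1 : 0 < v (-1) := by
    have h := (hclose (-1) (hKsub hm1K)).1
    have h2 := hcle _ hm1K
    rw [abs_of_pos hpos] at h2
    rw [abs_sub_lt_iff] at h
    linarith [h.2]
  -- zeros of v in each interval
  have key : ∀ z ∈ Z, ∃ w ∈ Set.Ioo (z - δ z) (z + δ z), v w = 0 ∧ deriv v w ≠ 0 ∧
      ∀ ζ' ∈ Set.Icc (z - δ z) (z + δ z), v ζ' = 0 → ζ' = w := by
    intro z hz
    obtain ⟨hsub, hdb, hsep⟩ := hδspec z hz
    set a := z - δ z with hadef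
    set b := z + δ z with hbdef
    have hab : a < b := by simp [hadef, hbdef]; linarith [hδpos z]
    have hJIcc : Set.Icc a b ⊆ Set.Icc (-1:ℝ) 1 :=
      fun y hy => Set.Ioo_subset_Icc_self (hsub hy)
    have hfar : ∀ x ∈ Set.Icc a b, x ∉ U → x ∈ K := fun x hx hxU => ⟨hJIcc hx, hxU⟩
    -- a and b are in K
    have hendK : ∀ x ∈ Set.Icc a b, (x = a ∨ x = b) → x ∈ K := by
      intro x hx hor
      refine hfar x hx ?_
      intro hxU
      simp only [hUdef, Set.mem_iUnion] at hxU
      obtain ⟨z', hz', hmem⟩ := hxU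
      by_cases hne : z' = z
      · subst hne
        rcases hor with rfl | rfl
        · exact absurd hmem.1 (lt_irrefl _)
        · exact absurd hmem.2 (lt_irrefl _)
      · exact sep_disjoint hx hmem (hsep z' hz' hne)
          ((hδspec z' hz').2.2 z hz (fun he => hne he.symm))
    have haK : a ∈ K := hendK a (Set.left_mem_Icc.2 hab.le) (Or.inl rfl)
    have hbK : b ∈ K := hendK b (Set.right_mem_Icc.2 hab.le) (Or.inr rfl)
    have hdz : deriv u z ≠ 0 := hsimp z hz.1 hz.2
    have hzmem : z ∈ Set.Icc a b := by
      constructor <;> simp [hadef, hbdef] <;> linarith [hδpos z]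
    have hεz : ε < |deriv u z| / 2 := hεZ z hz
    have hvcont : ContinuousOn v (Set.Icc a b) := hv.continuousOn.mono hJIcc
    have hucont : ContinuousOn u (Set.Icc a b) := hu.continuousOn.mono hJIcc
    -- sign of v at a, b dictated by u
    have hsignv : ∀ x ∈ K, (u x < 0 → v x < 0) ∧ (0 < u x → 0 < v x) := by
      intro x hx
      have h := (hclose x (hKsub hx)).1
      have h2 := hcle x hx
      rw [abs_sub_lt_iff] at h
      constructor <;> intro hs
      · rw [abs_of_neg hs] at h2; linarith [h.1]
      · rw [abs_of_pos hs] at h2; linarith [h.2]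
    rcases hdz.lt_or_gt with hneg | hpos'
    · -- deriv u z < 0 : apply key_interval to -v
      have hud : ∀ y ∈ Set.Icc a b, deriv u y < 0 := by
        intro y hy
        have := hdb y hy
        rw [abs_of_neg hneg] at this
        rcases abs_cases (deriv u y - deriv u z) with ⟨he, _⟩ | ⟨he, _⟩ <;> linarith
      have hvd : ∀ y ∈ Set.Icc a b, deriv v y < 0 := by
        intro y hy
        have h := (hclose y (hJIcc hy)).2.1
        rw [abs_sub_lt_iff] at h
        have h2 := hud y hy
        have h3 := hdb y hy
        rw [abs_of_neg hneg] at h3 hεz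
        rcases abs_cases (deriv u y - deriv u z) with ⟨he, _⟩ | ⟨he, _⟩ <;> linarith [h.1]
      have hanti : StrictAntiOn u (Set.Icc a b) :=
        strictAntiOn_of_deriv_neg (convex_Icc a b) hucont
          (fun y hy => hud y (by rw [interior_Icc] at hy; exact Set.Ioo_subset_Icc_self hy))
      have hua : 0 < u a := by
        have := hanti (Set.left_mem_Icc.2 hab.le) hzmem (by simp [hadef]; linarith [hδpos z])
        rw [hz.2] at this; exact this
      have hub : u b < 0 := by
        have := hanti hzmem (Set.right_mem_Icc.2 hab.le) (by simp [hbdef]; linarith [hδpos z])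
        rw [hz.2] at this; exact this
      have hva : 0 < v a := (hsignv a haK).2 hua
      have hvb : v b < 0 := (hsignv b hbK).1 hub
      obtain ⟨ζ, hζmem, hζ0, hζuniq⟩ := key_interval hab (v := fun x => -v x)
        (hvcont.neg) (by simpa using hva) (by simpa using hvb)
        (fun y hy => by show 0 < deriv (-v) y; rw [deriv.neg]; linarith [hvd y (Set.Ioo_subset_Icc_self hy)])
      refine ⟨ζ, hζmem, by simpa using hζ0, ?_, ?_⟩
      · exact ne_of_lt (hvd ζ (Set.Ioo_subset_Icc_self hζmem))
      · intro ζ' hζ' h0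
        exact hζuniq ζ' hζ' (by simpa using h0)
    · -- deriv u z > 0
      have hud : ∀ y ∈ Set.Icc a b, 0 < deriv u y := by
        intro y hy
        have := hdb y hy
        rw [abs_of_pos hpos'] at this
        rcases abs_cases (deriv u y - deriv u z) with ⟨he, _⟩ | ⟨he, _⟩ <;> linarith
      have hvd : ∀ y ∈ Set.Icc a b, 0 < deriv v y := by
        intro y hy
        have h := (hclose y (hJIcc hy)).2.1
        rw [abs_sub_lt_iff] at h
        have h2 := hud y hy
        have h3 := hdb y hy
        rw [abs_of_pos hpos'] at h3 hεz
        rcases abs_cases (deriv u y - deriv u z) with ⟨he, _⟩ | ⟨he, _⟩ <;> linarith [h.2]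
      have hmono : StrictMonoOn u (Set.Icc a b) :=
        strictMonoOn_of_deriv_pos (convex_Icc a b) hucont
          (fun y hy => hud y (by rw [interior_Icc] at hy; exact Set.Ioo_subset_Icc_self hy))
      have hua : u a < 0 := by
        have := hmono (Set.left_mem_Icc.2 hab.le) hzmem (by simp [hadef]; linarith [hδpos z])
        rw [hz.2] at this; exact this
      have hub : 0 < u b := by
        have := hmono hzmem (Set.right_mem_Icc.2 hab.le) (by simp [hbdef]; linarith [hδpos z])
        rw [hz.2] at this; exact this
      have hva : v a < 0 := (hsignv a haK).1 hua
      have hvb : 0 < v b := (hsignv b hbK).2 hub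
      obtain ⟨ζ, hζmem, hζ0, hζuniq⟩ := key_interval hab hvcont hva hvb
        (fun y hy => hvd y (Set.Ioo_subset_Icc_self hy))
      exact ⟨ζ, hζmem, hζ0, ne_of_gt (hvd ζ (Set.Ioo_subset_Icc_self hζmem)), hζuniq⟩
  -- package
  have key' : ∀ z : ℝ, ∃ w : ℝ, z ∈ Z → w ∈ Set.Ioo (z - δ z) (z + δ z) ∧ v w = 0 ∧
      deriv v w ≠ 0 ∧ ∀ ζ' ∈ Set.Icc (z - δ z) (z + δ z), v ζ' = 0 → ζ' = w := by
    intro z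
    by_cases hz : z ∈ Z
    · obtain ⟨w, h1, h2, h3, h4⟩ := key z hz
      exact ⟨w, fun _ => ⟨h1, h2, h3, h4⟩⟩
    · exact ⟨0, fun h => absurd h hz⟩
  choose ζ hζ using key'
  have hZv : {x ∈ Set.Ioo (-1:ℝ) 1 | v x = 0} = ζ '' Z := by
    ext x
    constructor
    · rintro ⟨hxI, hx0⟩
      by_cases hxU : x ∈ U
      · simp only [hUdef, Set.mem_iUnion] at hxU
        obtain ⟨z, hz, hmem⟩ := hxU
        exact ⟨z, hz, ((hζ z hz).2.2.2 x (Set.Ioo_subset_Icc_self hmem) hx0).symm⟩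
      · exact absurd hx0 (hvKnz x ⟨Set.Ioo_subset_Icc_self hxI, hxU⟩)
    · rintro ⟨z, hz, rfl⟩
      obtain ⟨h1, h2, _, _⟩ := hζ z hz
      exact ⟨(hδspec z hz).1 (Set.Ioo_subset_Icc_self h1), h2⟩
  have hinj : Set.InjOn ζ Z := by
    intro z hz z' hz' he
    by_contra hne
    have h1 := (hζ z hz).1
    have h2 := (hζ z' hz').1
    rw [he] at h1
    exact sep_disjoint (Set.Ioo_subset_Icc_self h1) h2
      ((hδspec z hz).2.2 z' hz' (fun hh => hne hh.symm))
      ((hδspec z' hz').2.2 z hz hne)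
  refine ⟨hv, ne_of_gt hvm1, hvKnz 1 hp1K, hvm1, ?_, ?_, ?_⟩
  · intro x hxI hx0
    have hx : x ∈ ζ '' Z := hZv ▸ (⟨hxI, hx0⟩ : x ∈ {x ∈ Set.Ioo (-1:ℝ) 1 | v x = 0})
    obtain ⟨z, hz, rfl⟩ := hx
    exact (hζ z hz).2.2.1
  · rw [hZv]; exact hfin.image _
  · rw [hZv, Set.ncard_image_of_injOn hinj, hcard]

/-- Each `S_k^ν` is open in `C²[-1,1]` (w.r.t. the sup-type `C²` norm), and the
sets `S_k^ν` for distinct `(k,ν)` are pairwise disjoint. -/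
theorem stmt9 :
    (∀ (k : ℕ) (ν : Bool) (u : ℝ → ℝ), SNodal k ν u →
      ∃ ε > 0, ∀ v : ℝ → ℝ, ContDiffOn ℝ 2 v (Set.Icc (-1 : ℝ) 1) →
        (∀ x ∈ Set.Icc (-1 : ℝ) 1,
          |v x - u x| < ε ∧ |deriv v x - deriv u x| < ε ∧
          |deriv (deriv v) x - deriv (deriv u) x| < ε) →
        SNodal k ν v) ∧
    (∀ (k k' : ℕ) (ν ν' : Bool) (u : ℝ → ℝ), (k, ν) ≠ (k', ν') →
      SNodal k ν u → ¬ SNodal k' ν' u) := by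
  have hderivneg : ∀ f : ℝ → ℝ, deriv (-f) = -(deriv f) := by
    intro f
    funext x
    simp only [Pi.neg_apply, Pi.neg_def]
    exact deriv.neg
  constructor
  · intro k ν u hu
    cases ν with
    | true =>
      simp only [SNodal, if_true] at hu ⊢
      exact splus_open k u hu
    | false =>
      simp only [SNodal, Bool.false_eq_true, if_false] at hu ⊢
      obtain ⟨ε, hε, hspec⟩ := splus_open k (-u) hu
      refine ⟨ε, hε, ?_⟩
      intro v hv hclose
      refine hspec (-v) hv.neg ?_
      intro x hx
      obtain ⟨h1, h2, h3⟩ := hclose x hx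
      refine ⟨?_, ?_, ?_⟩
      · have e : (-v) x - (-u) x = u x - v x := by simp; ring
        rw [e, abs_sub_comm]; exact h1
      · rw [hderivneg v, hderivneg u]
        have e : (-(deriv v)) x - (-(deriv u)) x = deriv u x - deriv v x := by simp; ring
        rw [e, abs_sub_comm]; exact h2
      · rw [hderivneg v, hderivneg u, hderivneg (deriv v), hderivneg (deriv u)]
        have e : (-(deriv (deriv v))) x - (-(deriv (deriv u))) x
            = deriv (deriv u) x - deriv (deriv v) x := by simp; ring
        rw [e, abs_sub_comm]; exact h3
  · intro k k' ν ν' u hne h1 h2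
    by_cases hν : ν = ν'
    · subst hν
      have hk : k ≠ k' := fun hk => hne (by rw [hk])
      cases ν with
      | true =>
        simp only [SNodal, if_true] at h1 h2
        exact hk (h1.2.2.2.2.2.2 ▸ h2.2.2.2.2.2.2 ▸ rfl)
      | false =>
        simp only [SNodal, Bool.false_eq_true, if_false] at h1 h2
        exact hk (h1.2.2.2.2.2.2 ▸ h2.2.2.2.2.2.2 ▸ rfl)
    · cases ν with
      | true =>
        cases ν' with
        | true => exact hν rfl
        | false =>
          simp only [SNodal, if_true, Bool.false_eq_true, if_false] at h1 h2
          have := h1.2.2.2.1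
          have h2' := h2.2.2.2.1
          simp only [Pi.neg_apply] at h2'
          linarith
      | false =>
        cases ν' with
        | false => exact hν rfl
        | true =>
          simp only [SNodal, if_true, Bool.false_eq_true, if_false] at h1 h2
          have := h2.2.2.2.1
          have h1' := h1.2.2.2.1
          simp only [Pi.neg_apply] at h1'
          linarith
end
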